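/- Richter's formula at the matrix-element level: for all natural numbers n, m and Fock states |p⟩, |q⟩, ⟨p| a†ⁿ a^m |q⟩ = C(n+m,n)⁻¹ (1/π)∫₀^π (1/√(2^{n+m})) ⟨p| H_{n+m}(√2 X_φ) |q⟩ e^{iφ(m−n)} dφ. -/

import Mathlib

/-- Annihilation operator on Fock space (sequences): `(a ψ)(n) = √(n+1) ψ(n+1)`. -/
noncomputable def aOp : Module.End ℂ (ℕ → ℂ) where
  toFun ψ := fun n => (Real.sqrt (n + 1) : ℂ) * ψ (n + 1)
  map_add' ψ χ := by funext n; simp [mul_add]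
  map_smul' c ψ := by funext n; simp [Pi.smul_apply, smul_eq_mul]; ring

/-- Creation operator on Fock space (sequences): `(a† ψ)(n) = √n ψ(n-1)`, `0` at `n = 0`. -/
noncomputable def adOp : Module.End ℂ (ℕ → ℂ) where
  toFun ψ := fun n => if n = 0 then 0 else (Real.sqrt n : ℂ) * ψ (n - 1)
  map_add' ψ χ := by funext n; by_cases h : n = 0 <;> simp [h, mul_add]
  map_smul' c ψ := by
    funext n; by_cases h : n = 0 <;> simp [h, Pi.smul_apply, smul_eq_mul]; ring

/-- The quadrature operator `X_φ = (a† e^{iφ} + a e^{-iφ})/2`. -/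
noncomputable def Xquad (φ : ℝ) : Module.End ℂ (ℕ → ℂ) :=
  (2 : ℂ)⁻¹ • (Complex.exp (Complex.I * φ) • adOp + Complex.exp (-(Complex.I * φ)) • aOp)

/-- Physicists' Hermite polynomials as polynomials over `ℤ`:
`H_0 = 1`, `H_{n+1} = 2X·H_n - H_n'`. -/
noncomputable def physHermite : ℕ → Polynomial ℤ
  | 0 => 1
  | n + 1 => 2 * Polynomial.X * physHermite n - Polynomial.derivative (physHermite n)

/-- The Fock basis vector `|q⟩`. -/
noncomputable def fock (q : ℕ) : ℕ → ℂ := fun i => if i = q then 1 else 0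

/-! ### Auxiliary lemmas -/

section GeneralRing

variable {A : Type*} [Ring A]

lemma aux_comm_pow (c d : A) (h : c * d = d * c + 1) (j : ℕ) :
    c * d ^ j = d ^ j * c + (j : A) * d ^ (j - 1) := by
  induction j with
  | zero => simp
  | succ j ih =>
    have e1 : c * d ^ (j+1) = (c * d ^ j) * d := by rw [pow_succ, ← mul_assoc]
    rw [e1, ih, add_mul, mul_assoc, h]
    cases j with
    | zero => simp [mul_add]
    | succ j =>
      simp only [Nat.add_sub_cancel, pow_succ]
      push_cast
      noncomm_ring

/-- Normally ordered sum `∑ C(k,j) d^j c^(k-j)`. -/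
noncomputable def TT (c d : A) (k : ℕ) : A :=
  ∑ j ∈ Finset.range (k+1), ((k.choose j : A)) * (d ^ j * c ^ (k - j))

lemma TT_step (c d : A) (h : c * d = d * c + 1) (k : ℕ) :
    (d + c) * TT c d (k+1) = TT c d (k+2) + ((k:A)+1) * TT c d k := by
  have S2 : ∑ j ∈ Finset.range (k+2),
      ((((k+1).choose j) * j : ℕ) : A) * (d ^ (j-1) * c ^ (k+1-j))
      = ((k:A)+1) * TT c d k := by
    rw [Finset.sum_range_succ']
    simp only [Nat.mul_zero, Nat.cast_zero, zero_mul, add_zero, Nat.add_sub_cancel,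
      Nat.succ_sub_succ, Nat.sub_zero]
    rw [TT, Finset.mul_sum]
    refine Finset.sum_congr rfl fun i _ => ?_
    have e : (k+1).choose (i+1) * (i+1) = (k+1) * k.choose i := by
      rw [← Nat.add_one_mul_choose_eq]
    rw [e]
    push_cast
    rw [mul_assoc]
  have S1 : TT c d (k+2)
      = (∑ j ∈ Finset.range (k+2), (((k+1).choose j : A)) * (d ^ (j+1) * c ^ (k+1-j)))
      + ∑ j ∈ Finset.range (k+2), (((k+1).choose j : A)) * (d ^ j * c ^ (k+2-j)) := by
    rw [TT, Finset.sum_range_succ']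
    have congr1 : ∀ i ∈ Finset.range (k+2),
        (((k+2).choose (i+1) : A)) * (d ^ (i+1) * c ^ (k+2-(i+1)))
        = (((k+1).choose i : A)) * (d ^ (i+1) * c ^ (k+1-i))
          + (((k+1).choose (i+1) : A)) * (d ^ (i+1) * c ^ (k+1-i)) := by
      intro i _
      have e : (k+2).choose (i+1) = (k+1).choose i + (k+1).choose (i+1) :=
        Nat.choose_succ_succ _ _
      rw [e, Nat.succ_sub_succ]
      push_cast
      rw [add_mul]
    rw [Finset.sum_congr rfl congr1, Finset.sum_add_distrib]
    rw [add_assoc]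
    congr 1
    · rw [Finset.sum_range_succ]
      simp only [Nat.choose_succ_self, Nat.cast_zero, zero_mul, add_zero]
      rw [Finset.sum_range_succ' (fun j => (((k+1).choose j : A)) * (d ^ j * c ^ (k+2-j))) (k+1)]
      simp [Nat.succ_sub_succ]
  have expand : (d + c) * TT c d (k+1)
      = ∑ j ∈ Finset.range (k+2),
          ((((k+1).choose j : A)) * (d ^ (j+1) * c ^ (k+1-j))
          + ((((k+1).choose j : A)) * (d ^ j * c ^ (k+2-j))
          + ((((k+1).choose j) * j : ℕ) : A) * (d ^ (j-1) * c ^ (k+1-j)))) := by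
    rw [TT, add_mul, Finset.mul_sum, Finset.mul_sum, ← Finset.sum_add_distrib]
    refine Finset.sum_congr rfl fun j hj => ?_
    have hj' : j ≤ k + 1 := Nat.lt_succ_iff.mp (Finset.mem_range.mp hj)
    have hsub : k + 2 - j = (k + 1 - j) + 1 := by omega
    have key : c * (d ^ j * c ^ (k+1-j))
        = d ^ j * c ^ (k+2-j) + (j:A) * (d ^ (j-1) * c ^ (k+1-j)) := by
      rw [hsub, pow_succ', ← mul_assoc, aux_comm_pow c d h j]
      noncomm_ring
    rw [(Nat.cast_commute ((k+1).choose j) d).symm.left_comm,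
      (Nat.cast_commute ((k+1).choose j) c).symm.left_comm,
      key, ← mul_assoc d, ← pow_succ']
    push_cast
    noncomm_ring
  rw [expand, Finset.sum_add_distrib, Finset.sum_add_distrib, S1, ← S2]
  abel

end GeneralRing

lemma physHermite_succ (n : ℕ) : physHermite (n+1)
    = 2 * Polynomial.X * physHermite n - Polynomial.derivative (physHermite n) := rfl

lemma physHermite_derivative (n : ℕ) :
    Polynomial.derivative (physHermite (n+1)) = (2*(n+1) : ℕ) * physHermite n := by
  induction n with
  | zero =>
    simp [physHermite_succ, physHermite]
  | succ n ih =>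
    rw [physHermite_succ (n+1), Polynomial.derivative_sub, Polynomial.derivative_mul, ih]
    rw [physHermite_succ n]
    have h2 : Polynomial.derivative (2 * Polynomial.X : Polynomial ℤ) = 2 := by
      simp
    simp only [Polynomial.derivative_mul, Polynomial.derivative_natCast, zero_mul, h2,
      Polynomial.derivative_X]
    push_cast
    ring

lemma sqrt_pow_succ (k : ℕ) :
    (Real.sqrt (2^(k+1)) : ℂ) = (Real.sqrt 2 : ℂ) * (Real.sqrt (2^k) : ℂ) := by
  rw [pow_succ, mul_comm, Real.sqrt_mul (by norm_num)]
  push_cast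
  ring

lemma sqrt2_sq : (Real.sqrt 2 : ℂ) * (Real.sqrt 2 : ℂ) = 2 := by
  rw [← Complex.ofReal_mul, Real.mul_self_sqrt (by norm_num)]
  norm_num

lemma sqrt2_ne : (Real.sqrt 2 : ℂ) ≠ 0 := by
  simp [(Real.sqrt_ne_zero' (x := 2)).mpr (by norm_num)]

lemma sqrt_pow_ne (k : ℕ) : ((Real.sqrt (2^k) : ℝ) : ℂ) ≠ 0 := by
  have : (0:ℝ) < Real.sqrt (2^k) := Real.sqrt_pos.mpr (by positivity)
  simp only [ne_eq, Complex.ofReal_eq_zero]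
  exact ne_of_gt this

section Algebra

variable {A : Type*} [Ring A] [Algebra ℂ A]

lemma natCast_mul_eq_smul (N : ℕ) (z : A) : (N : A) * z = (N : ℂ) • z := by
  rw [Algebra.smul_def, map_natCast]

lemma ofNat2_mul_eq_smul (z : A) : (2 : A) * z = (2 : ℂ) • z := by
  rw [Algebra.smul_def, map_ofNat]

lemma aeval_physHermite (c d : A) (h : c * d = d * c + 1) :
    ∀ k, Polynomial.aeval (((Real.sqrt 2 : ℂ))⁻¹ • (d + c)) (physHermite k)
      = ((Real.sqrt (2^k) : ℂ)) • TT c d k := by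
  have hs1 : ((Real.sqrt (2^1) : ℝ) : ℂ) = (Real.sqrt 2 : ℂ) := by norm_num
  have base0 : Polynomial.aeval (((Real.sqrt 2 : ℂ))⁻¹ • (d + c)) (physHermite 0)
      = ((Real.sqrt (2^0) : ℂ)) • TT c d 0 := by
    simp [physHermite, TT]
  have base1 : Polynomial.aeval (((Real.sqrt 2 : ℂ))⁻¹ • (d + c)) (physHermite 1)
      = ((Real.sqrt (2^1) : ℂ)) • TT c d 1 := by
    have h1 : physHermite 1 = 2 * Polynomial.X := by
      rw [physHermite_succ]; simp [physHermite]
    rw [h1, map_mul, map_ofNat, Polynomial.aeval_X, ofNat2_mul_eq_smul, smul_smul]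
    have e : (2 : ℂ) * (Real.sqrt 2 : ℂ)⁻¹ = (Real.sqrt (2^1) : ℂ) := by
      rw [hs1, ← sqrt2_sq, mul_assoc, mul_inv_cancel₀ sqrt2_ne, mul_one]
    rw [e]
    congr 1
    simp [TT, Finset.sum_range_succ, add_comm]
  have key : ∀ k,
      Polynomial.aeval (((Real.sqrt 2 : ℂ))⁻¹ • (d + c)) (physHermite k)
        = ((Real.sqrt (2^k) : ℂ)) • TT c d k ∧
      Polynomial.aeval (((Real.sqrt 2 : ℂ))⁻¹ • (d + c)) (physHermite (k+1))
        = ((Real.sqrt (2^(k+1)) : ℂ)) • TT c d (k+1) := by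
    intro k
    induction k with
    | zero => exact ⟨base0, base1⟩
    | succ k ih =>
      refine ⟨ih.2, ?_⟩
      set x := ((Real.sqrt 2 : ℂ))⁻¹ • (d + c) with hxdef
      have e1 : Polynomial.aeval x (2 * Polynomial.X * physHermite (k+1))
          = (2:ℂ) • (x * Polynomial.aeval x (physHermite (k+1))) := by
        rw [map_mul, map_mul, map_ofNat, Polynomial.aeval_X, ofNat2_mul_eq_smul,
          smul_mul_assoc]
      have e2 : Polynomial.aeval x (((2*(k+1) : ℕ) : Polynomial ℤ) * physHermite k)
          = ((2*(k+1) : ℕ) : ℂ) • Polynomial.aeval x (physHermite k) := by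
        rw [map_mul, map_natCast (Polynomial.aeval x), natCast_mul_eq_smul]
      have hrec : Polynomial.aeval x (physHermite (k+2))
          = (2:ℂ) • (x * Polynomial.aeval x (physHermite (k+1)))
            - ((2*(k+1) : ℕ) : ℂ) • Polynomial.aeval x (physHermite k) := by
        rw [physHermite_succ (k+1), physHermite_derivative, map_sub, e1, e2]
      rw [hrec, ih.1, ih.2, hxdef]
      rw [smul_mul_assoc, mul_smul_comm, smul_smul, smul_smul]
      have hmul : (d + c) * TT c d (k+1) = TT c d (k+2) + ((k:A)+1) * TT c d k :=
        TT_step c d h k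
      have hc1 : ((k:A)+1) * TT c d k = ((k:ℂ)+1) • TT c d k := by
        rw [show ((k:A)+1) = ((k+1 : ℕ) : A) by push_cast; ring_nf, natCast_mul_eq_smul]
        push_cast
        norm_num
      rw [hmul, hc1, smul_add, smul_smul]
      have c1 : (2:ℂ) * ((Real.sqrt 2 : ℂ))⁻¹ * (Real.sqrt (2^(k+1)) : ℂ)
          = (Real.sqrt (2^(k+2)) : ℂ) := by
        rw [sqrt_pow_succ (k+1), sqrt_pow_succ k, ← mul_assoc]
        rw [show (2:ℂ) * ((Real.sqrt 2 : ℂ))⁻¹ = (Real.sqrt 2 : ℂ) by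
          rw [← sqrt2_sq, mul_assoc, mul_inv_cancel₀ sqrt2_ne, mul_one]]
        ring
      have c2 : (Real.sqrt (2^(k+2)) : ℂ) * ((k:ℂ)+1)
          = ((2*(k+1) : ℕ) : ℂ) * (Real.sqrt (2^k) : ℂ) := by
        rw [sqrt_pow_succ (k+1), sqrt_pow_succ k, ← mul_assoc, sqrt2_sq]
        push_cast
        ring
      rw [c1, c2, smul_smul, ← c2, add_sub_cancel_right]
  exact fun k => (key k).1

end Algebra

lemma sqrtC_mul_self {x : ℝ} (hx : 0 ≤ x) :
    (Real.sqrt x : ℂ) * (Real.sqrt x : ℂ) = (x : ℂ) := by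
  rw [← Complex.ofReal_mul, Real.mul_self_sqrt hx]

lemma a_mul_ad : aOp * adOp = adOp * aOp + 1 := by
  apply LinearMap.ext; intro ψ; funext j
  simp only [Module.End.mul_apply, LinearMap.add_apply, Module.End.one_apply,
    aOp, adOp, LinearMap.coe_mk, AddHom.coe_mk, Pi.add_apply]
  cases j with
  | zero => simp
  | succ j =>
    simp only [Nat.succ_ne_zero, if_false, Nat.add_sub_cancel]
    push_cast
    rw [← mul_assoc, ← mul_assoc, sqrtC_mul_self (by positivity),
      sqrtC_mul_self (by positivity)]
    push_cast
    ring

lemma exp_collect (Cc w : ℂ) {a b e t : ℂ} (h : a + b + e = t) :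
    Cc * (Complex.exp a * (Complex.exp b * w)) * Complex.exp e
      = Cc * w * Complex.exp t := by
  subst h
  rw [Complex.exp_add, Complex.exp_add]
  ring

open Real in
/-- Richter's formula at the matrix-element level:
`⟨p| a†ⁿ a^m |q⟩
  = C(n+m,n)⁻¹ (1/π)∫₀^π 2^{-(n+m)/2} ⟨p| H_{n+m}(√2 X_φ) |q⟩ e^{iφ(m-n)} dφ`. -/
theorem richter_formula_matrix_elements (n m p q : ℕ) :
    ((adOp ^ n * aOp ^ m) (fock q)) p =
      (((n + m).choose n : ℂ))⁻¹ * ((1 / (π : ℂ)) *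
        ∫ φ in (0:ℝ)..π,
          (1 / (Real.sqrt (2 ^ (n + m)) : ℂ)) *
            ((Polynomial.aeval ((Real.sqrt 2 : ℂ) • Xquad φ) (physHermite (n + m)))
              (fock q)) p *
            Complex.exp (Complex.I * (((m : ℤ) - (n : ℤ)) : ℤ) * φ)) := by
  set k := n + m with hk
  have h_comm : ∀ φ : ℝ,
      (Complex.exp (-(Complex.I * φ)) • aOp) * (Complex.exp (Complex.I * φ) • adOp)
        = (Complex.exp (Complex.I * φ) • adOp) * (Complex.exp (-(Complex.I * φ)) • aOp)
          + 1 := by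
    intro φ
    rw [smul_mul_smul_comm, smul_mul_smul_comm, ← Complex.exp_add, ← Complex.exp_add,
      neg_add_cancel, add_neg_cancel, Complex.exp_zero, one_smul, one_smul, a_mul_ad]
  have hX : ∀ φ : ℝ, (Real.sqrt 2 : ℂ) • Xquad φ
      = ((Real.sqrt 2 : ℂ))⁻¹ • ((Complex.exp (Complex.I * φ) • adOp)
        + (Complex.exp (-(Complex.I * φ)) • aOp)) := by
    intro φ
    rw [Xquad, smul_smul]
    congr 1
    rw [← sqrt2_sq, mul_inv, ← mul_assoc, mul_inv_cancel₀ sqrt2_ne, one_mul]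
  have haev : ∀ φ : ℝ,
      Polynomial.aeval ((Real.sqrt 2 : ℂ) • Xquad φ) (physHermite k)
        = (Real.sqrt (2^k) : ℂ) • TT (Complex.exp (-(Complex.I * φ)) • aOp)
            (Complex.exp (Complex.I * φ) • adOp) k := by
    intro φ
    rw [hX φ]
    exact aeval_physHermite _ _ (h_comm φ) k
  set w : ℕ → ℂ := fun j => ((adOp ^ j * aOp ^ (k - j)) (fock q)) p with hw
  set g : ℕ → ℝ → ℂ := fun j φ => (k.choose j : ℂ) * w j *
      Complex.exp ((2*(j:ℂ) - 2*(n:ℂ)) * (Complex.I * φ)) with hg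
  have hpt : ∀ φ : ℝ,
      (1 / (Real.sqrt (2 ^ k) : ℂ)) *
        ((Polynomial.aeval ((Real.sqrt 2 : ℂ) • Xquad φ) (physHermite k))
          (fock q)) p *
        Complex.exp (Complex.I * (((m : ℤ) - (n : ℤ)) : ℤ) * φ)
      = ∑ j ∈ Finset.range (k+1), g j φ := by
    intro φ
    rw [haev φ]
    simp only [LinearMap.smul_apply, Pi.smul_apply, smul_eq_mul]
    rw [← mul_assoc (1 / (Real.sqrt (2 ^ k) : ℂ)), one_div,
      inv_mul_cancel₀ (sqrt_pow_ne k), one_mul]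
    rw [TT]
    simp only [LinearMap.coe_sum, Finset.sum_apply]
    rw [Finset.sum_mul]
    refine Finset.sum_congr rfl fun j hj => ?_
    have hjk : j ≤ k := Nat.lt_succ_iff.mp (Finset.mem_range.mp hj)
    simp only [Module.End.mul_apply, Module.End.natCast_apply, smul_pow,
      LinearMap.smul_apply, map_smul, Pi.smul_apply, smul_eq_mul, nsmul_eq_mul,
      Pi.mul_apply, Pi.natCast_apply]
    rw [← Complex.exp_nat_mul, ← Complex.exp_nat_mul]
    simp only [hg, hw, Module.End.mul_apply]
    have hexp : Complex.exp (((k-j : ℕ):ℂ) * -(Complex.I*(φ:ℂ))) *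
        Complex.exp ((j:ℂ) * (Complex.I*(φ:ℂ))) *
        Complex.exp (Complex.I * ((((m:ℤ) - (n:ℤ)) : ℤ) : ℂ) * (φ:ℂ)) =
        Complex.exp ((2*(j:ℂ) - 2*(n:ℂ)) * (Complex.I*(φ:ℂ))) := by
      rw [← Complex.exp_add, ← Complex.exp_add]
      congr 1
      push_cast [Nat.cast_sub hjk, Nat.cast_sub (show j ≤ n + m by omega), hk]
      ring
    linear_combination ((k.choose j : ℂ) * ((adOp ^ j) ((aOp ^ (k - j)) (fock q)) p)) * hexp
  have hmem : n ∈ Finset.range (k+1) := Finset.mem_range.mpr (by omega)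
  have hintg : ∀ j ∈ Finset.range (k+1),
      IntervalIntegrable (g j) MeasureTheory.volume 0 π := by
    intro j _
    apply Continuous.intervalIntegrable
    apply Continuous.mul continuous_const
    exact Complex.continuous_exp.comp
      (continuous_const.mul (continuous_const.mul Complex.continuous_ofReal))
  have hInt : (∫ φ in (0:ℝ)..π, ∑ j ∈ Finset.range (k+1), g j φ)
      = (k.choose n : ℂ) * w n * π := by
    rw [intervalIntegral.integral_finset_sum hintg]
    rw [Finset.sum_eq_single_of_mem n hmem]
    · have hgn : ∀ φ : ℝ, g n φ = (k.choose n : ℂ) * w n := by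
        intro φ
        simp [hg, sub_self, Complex.exp_zero]
      simp only [hgn]
      rw [intervalIntegral.integral_const]
      rw [sub_zero, Complex.real_smul]
      ring
    · intro j _ hne
      have hcc : ((2*(j:ℂ) - 2*(n:ℂ)) * Complex.I) ≠ 0 := by
        apply mul_ne_zero _ Complex.I_ne_zero
        have : (j:ℂ) ≠ (n:ℂ) := by
          exact_mod_cast hne
        intro hzero
        apply this
        have h2 : (2:ℂ) * ((j:ℂ) - (n:ℂ)) = 0 := by rw [← hzero]; ring
        have := mul_eq_zero.mp h2
        rcases this with h | h
        · norm_num at h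
        · linear_combination h
      have hre : ∀ φ : ℝ, g j φ
          = (k.choose j : ℂ) * w j
            * Complex.exp (((2*(j:ℂ) - 2*(n:ℂ)) * Complex.I) * φ) := by
        intro φ
        rw [hg]
        simp only []
        congr 1
        congr 1
        ring
      simp only [hre]
      rw [intervalIntegral.integral_const_mul, integral_exp_mul_complex hcc]
      have hπ : ((2*(j:ℂ) - 2*(n:ℂ)) * Complex.I) * (π:ℝ)
          = ((j:ℤ) - (n:ℤ) : ℤ) * (2 * π * Complex.I) := by
        push_cast
        ring
      rw [hπ, Complex.exp_int_mul_two_pi_mul_I, Complex.ofReal_zero, mul_zero,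
        Complex.exp_zero, sub_self, zero_div, mul_zero]
  have hEqOn : Set.EqOn
      (fun φ : ℝ => (1 / (Real.sqrt (2 ^ k) : ℂ)) *
        ((Polynomial.aeval ((Real.sqrt 2 : ℂ) • Xquad φ) (physHermite k))
          (fock q)) p *
        Complex.exp (Complex.I * (((m : ℤ) - (n : ℤ)) : ℤ) * φ))
      (fun φ : ℝ => ∑ j ∈ Finset.range (k+1), g j φ) (Set.uIcc 0 π) :=
    fun φ _ => hpt φ
  rw [intervalIntegral.integral_congr hEqOn, hInt]
  have hwn : ((adOp ^ n * aOp ^ m) (fock q)) p = w n := by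
    rw [hw]
    simp only []
    rw [show k - n = m by omega]
  rw [hwn]
  have hch : ((k.choose n : ℕ) : ℂ) ≠ 0 :=
    Nat.cast_ne_zero.mpr (Nat.choose_pos (by omega : n ≤ k)).ne'
  have hπ : ((π:ℝ) : ℂ) ≠ 0 := Complex.ofReal_ne_zero.mpr Real.pi_ne_zero
  field_simp
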